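/- For every finite, simple, connected, undirected graph G and every positive integer K: the cop number c(G) equals K if and only if the concurrent cop number c̃(G) equals K. Equivalently, c̃(G) = c(G). -/

import Mathlib

open Finset Filter

noncomputable section

variable {V : Type*} [Fintype V] [DecidableEq V]

/-- The closed neighborhood `N[u]` of a vertex `u`: `u` together with its neighbors. -/
def nbhd (G : SimpleGraph V) [DecidableRel G.Adj] (u : V) : Finset V :=
  insert u (G.neighborFinset u)

lemma nbhd_nonempty (G : SimpleGraph V) [DecidableRel G.Adj] (u : V) :
    (nbhd G u).Nonempty :=
  ⟨u, Finset.mem_insert_self u _⟩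

/-! ### The turn-based cops and robber game (TBCR) with `K` cops -/

/-- A position of the `K`-cop game: the cops' locations and the robber's location. -/
abbrev PosK (V : Type*) (K : ℕ) := (Fin K → V) × V

/-- A (deterministic, history-dependent) cop strategy for TBCR: an initial placement
of the `K` cops, and a move function from histories of completed rounds. -/
abbrev TBCop (V : Type*) (K : ℕ) := (Fin K → V) × (List (PosK V K) → Fin K → V)

/-- A (deterministic, history-dependent) robber strategy for TBCR: an initial placement
(seeing the cops' placement), and a move function from histories of completed rounds
together with the cops' fresh move (the cop player moves first in each round). -/
abbrev TBRob (V : Type*) (K : ℕ) := ((Fin K → V) → V) × (List (PosK V K) → (Fin K → V) → V)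

/-- The history of completed rounds of TBCR after round `t`; each token must move within its
closed neighborhood (attempted illegal moves leave the token in place). -/
def tbPlay (G : SimpleGraph V) [DecidableRel G.Adj] {K : ℕ}
    (sc : TBCop V K) (sr : TBRob V K) : ℕ → List (PosK V K)
  | 0 => [(sc.1, sr.1 sc.1)]
  | (t+1) =>
    let h := tbPlay G sc sr t
    let p := h.getLast?.getD (sc.1, sr.1 sc.1)
    let c' : Fin K → V := fun i => if sc.2 h i ∈ nbhd G (p.1 i) then sc.2 h i else p.1 i
    let w := sr.2 h c'
    h ++ [(c', if w ∈ nbhd G p.2 then w else p.2)]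

/-- The position of the TBCR game at the end of round `t`. -/
def tbPos (G : SimpleGraph V) [DecidableRel G.Adj] {K : ℕ}
    (sc : TBCop V K) (sr : TBRob V K) (t : ℕ) : PosK V K :=
  (tbPlay G sc sr t).getLast?.getD (sc.1, sr.1 sc.1)

/-- The robber is captured in TBCR: at some time a cop occupies the robber's current
vertex (either at the end of a round, or just after the cops' half of a round). -/
def tbCaptured (G : SimpleGraph V) [DecidableRel G.Adj] {K : ℕ}
    (sc : TBCop V K) (sr : TBRob V K) : Prop :=
  ∃ t : ℕ, ∃ i : Fin K,
    (tbPos G sc sr t).1 i = (tbPos G sc sr t).2 ∨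
    (tbPos G sc sr (t+1)).1 i = (tbPos G sc sr t).2

/-- `K` cops suffice in the turn-based game: the cop player has a strategy guaranteeing
capture against every robber strategy. -/
def tbCopWin (G : SimpleGraph V) [DecidableRel G.Adj] (K : ℕ) : Prop :=
  ∃ sc : TBCop V K, ∀ sr : TBRob V K, tbCaptured G sc sr

/-- The cop number `c(G)`: the minimum `K` for which the cop player wins TBCR. -/
def copNumber (G : SimpleGraph V) [DecidableRel G.Adj] : ℕ :=
  sInf {K | tbCopWin G K}

/-! ### The concurrent cops and robber game (CCCR) with `K` cops -/

/-- A randomized cop strategy in CCCR: to each finite history it assigns a probability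
distribution over the cops' next moves. -/
abbrev CCCop (V : Type*) (K : ℕ) := List (PosK V K) → PMF (Fin K → V)

/-- A randomized robber strategy in CCCR. -/
abbrev CCRob (V : Type*) (K : ℕ) := List (PosK V K) → PMF V

/-- A strategy is memoryless if the distribution it assigns depends only on the
current (i.e. most recent) position. -/
def MemorylessK {K : ℕ} (π : List (PosK V K) → PMF (Fin K → V)) : Prop :=
  ∀ h₁ h₂ : List (PosK V K), h₁.getLast? = h₂.getLast? → π h₁ = π h₂

/-- The CCCR transition function for `K` cops: both players move simultaneously, each
token within its closed neighborhood (illegal moves are ignored); a capture position is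
absorbing; if a cop and the robber swap adjacent vertices, the robber is captured
\"en passant\". -/
def ccStep (G : SimpleGraph V) [DecidableRel G.Adj] {K : ℕ}
    (p : PosK V K) (u : Fin K → V) (w : V) : PosK V K :=
  if ∃ i, p.1 i = p.2 then p
  else
    let u' : Fin K → V := fun i => if u i ∈ nbhd G (p.1 i) then u i else p.1 i
    let w' : V := if w ∈ nbhd G p.2 then w else p.2
    if ∃ i, u' i = p.2 ∧ w' = p.1 i then (u', p.2) else (u', w')

/-- The distribution over histories of the first `t+1` positions of CCCR, induced by a
pair of randomized strategies and an initial position. -/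
def ccPlay (G : SimpleGraph V) [DecidableRel G.Adj] {K : ℕ}
    (πC : CCCop V K) (πR : CCRob V K) (init : PosK V K) : ℕ → PMF (List (PosK V K))
  | 0 => PMF.pure [init]
  | (t+1) => (ccPlay G πC πR init t).bind fun h =>
      (πC h).bind fun u => (πR h).bind fun w =>
        PMF.pure (h ++ [ccStep G (h.getLast?.getD init) u w])

/-- The probability that the robber is still free (not captured) after round `t`. -/
def ccFreeProb (G : SimpleGraph V) [DecidableRel G.Adj] {K : ℕ}
    (πC : CCCop V K) (πR : CCRob V K) (init : PosK V K) (t : ℕ) : ENNReal :=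
  (ccPlay G πC πR init t).toOuterMeasure
    {h | ∀ i, (h.getLast?.getD init).1 i ≠ (h.getLast?.getD init).2}

/-- `K` cops suffice in the concurrent game: the cop player has a strategy ensuring
that, from every initial position and against every robber strategy, capture occurs
with probability one (the set of infinite histories avoiding capture has probability
zero). -/
def ccCopWin (G : SimpleGraph V) [DecidableRel G.Adj] (K : ℕ) : Prop :=
  ∃ πC : CCCop V K, ∀ init : PosK V K, ∀ πR : CCRob V K,
    (⨅ t : ℕ, ccFreeProb G πC πR init t) = 0

/-- The concurrent cop number `c̃(G)`. -/
def ccopNumber (G : SimpleGraph V) [DecidableRel G.Adj] : ℕ :=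
  sInf {K | ccCopWin G K}


/-! ### Auxiliary development -/

namespace CCCRAux

open Relation

variable (G : SimpleGraph V) [DecidableRel G.Adj]

/-- Union of the closed neighborhoods of the cops. -/
def NC {K : ℕ} (C : Fin K → V) : Finset V :=
  Finset.univ.biUnion fun i => nbhd G (C i)

lemma mem_NC {K : ℕ} {C : Fin K → V} {v : V} :
    v ∈ NC G C ↔ ∃ i, v ∈ nbhd G (C i) := by
  simp [NC]

lemma mem_nbhd_self (u : V) : u ∈ nbhd G u := Finset.mem_insert_self _ _

/-- One simultaneous legal move of all cops. -/
def CopStep {K : ℕ} (C C' : Fin K → V) : Prop := ∀ i, C' i ∈ nbhd G (C i)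

lemma copStep_refl {K : ℕ} (C : Fin K → V) : CopStep G C C :=
  fun _ => Finset.mem_insert_self _ _

lemma self_mem_NC {K : ℕ} (C : Fin K → V) (i : Fin K) : C i ∈ NC G C :=
  (mem_NC G).2 ⟨i, Finset.mem_insert_self _ _⟩

lemma copStep_mem_NC {K : ℕ} {C C' : Fin K → V} (h : CopStep G C C') (i : Fin K) :
    C' i ∈ NC G C :=
  (mem_NC G).2 ⟨i, h i⟩

/-- The rank hierarchy of the "blind-trap" game: a position is in `W (k+1)` if for
every robber move `w` that is outside the cops' reach, the cops have a response
landing the new position in `W k`.  (Positions where the robber has no safe move at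
all are in `W 1`.) -/
def W (K : ℕ) : ℕ → Set (PosK V K)
  | 0 => ∅
  | (k+1) => {p | ∀ w ∈ nbhd G p.2, w ∉ NC G p.1 →
      ∃ C', CopStep G p.1 C' ∧ ((C', w) : PosK V K) ∈ W K k}

lemma W_succ_subset {K : ℕ} : ∀ k : ℕ, W G K k ⊆ W G K (k+1) := by
  intro k
  induction k with
  | zero => intro p hp; exact absurd hp (by simp [W])
  | succ k ih =>
    intro p hp w hw hw2
    obtain ⟨C', hC', hm⟩ := hp w hw hw2
    exact ⟨C', hC', ih hm⟩

lemma W_mono {K : ℕ} {k l : ℕ} (hkl : k ≤ l) : W G K k ⊆ W G K l := by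
  induction l with
  | zero => cases Nat.le_zero.mp hkl; exact le_refl _
  | succ l ih =>
    rcases Nat.lt_or_ge k (l+1) with h | h
    · exact (ih (Nat.lt_succ_iff.mp h)).trans (W_succ_subset G l)
    · cases le_antisymm hkl h; exact le_refl _

/-- Everything is eventually in `W`. -/
def AllWin (K : ℕ) : Prop := ∀ p : PosK V K, ∃ k, p ∈ W G K k

lemma esc_step {K : ℕ} {p : PosK V K} (hp : ∀ k, p ∉ W G K k) :
    ∃ w, w ∈ nbhd G p.2 ∧ w ∉ NC G p.1 ∧
      ∀ C', CopStep G p.1 C' → ∀ k, ((C', w) : PosK V K) ∉ W G K k := by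
  by_contra h
  push_neg at h
  have hsel : ∀ w : V, ∃ k : ℕ, (w ∈ nbhd G p.2 → w ∉ NC G p.1 →
      ∃ C', CopStep G p.1 C' ∧ ((C', w) : PosK V K) ∈ W G K k) := by
    intro w
    by_cases hw : w ∈ nbhd G p.2
    · by_cases hw2 : w ∉ NC G p.1
      · obtain ⟨C', hC', k, hk⟩ := h w hw hw2
        exact ⟨k, fun _ _ => ⟨C', hC', hk⟩⟩
      · exact ⟨0, fun _ h' => absurd h' hw2⟩
    · exact ⟨0, fun h' => absurd h' hw⟩
  choose f hf using hsel
  apply hp (Finset.univ.sup f + 1)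
  intro w hw hw2
  obtain ⟨C', hC', hm⟩ := hf w hw hw2
  exact ⟨C', hC', W_mono G (Finset.le_sup (Finset.mem_univ w)) hm⟩

lemma sectionFull_step {K : ℕ} {D D' : Fin K → V} (hDD' : CopStep G D D')
    (h : ∀ r : V, ∃ k, ((D', r) : PosK V K) ∈ W G K k) :
    ∀ r : V, ∃ k, ((D, r) : PosK V K) ∈ W G K k := by
  choose f hf using h
  intro r
  refine ⟨Finset.univ.sup f + 1, ?_⟩
  intro w hw hw2
  exact ⟨D', hDD', W_mono G (Finset.le_sup (Finset.mem_univ w)) (hf w)⟩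

lemma single_walk {K : ℕ} {a b : V} (wk : G.Walk a b) :
    ∀ (C : Fin K → V) (i : Fin K), C i = a →
      ReflTransGen (CopStep G) C (Function.update C i b) := by
  induction wk with
  | nil =>
    intro C i hi
    rw [← hi, Function.update_eq_self]
  | cons hadj wk ih =>
    rename_i a c b
    intro C i hi
    have step1 : CopStep G C (Function.update C i c) := by
      intro j
      rcases eq_or_ne j i with rfl | hne
      · rw [Function.update_self, hi]
        exact Finset.mem_insert_of_mem ((G.mem_neighborFinset a c).2 hadj)
      · rw [Function.update_of_ne hne]
        exact Finset.mem_insert_self _ _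
    have := ih (Function.update C i c) i (Function.update_self _ _ _)
    rw [Function.update_idem] at this
    exact ReflTransGen.head step1 this

lemma reflTrans_copStep (hconn : G.Connected) {K : ℕ} (C C' : Fin K → V) :
    ReflTransGen (CopStep G) C C' := by
  classical
  have main : ∀ s : Finset (Fin K),
      ReflTransGen (CopStep G) C (fun i => if i ∈ s then C' i else C i) := by
    intro s
    induction s using Finset.induction with
    | empty => simpa using ReflTransGen.refl
    | @insert j s hj ih =>
      refine ih.trans ?_
      have hreach : G.Reachable ((fun i => if i ∈ s then C' i else C i) j) (C' j) := by
        exact hconn.preconnected _ _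
      obtain ⟨wk⟩ := hreach
      have := single_walk G wk (fun i => if i ∈ s then C' i else C i) j rfl
      convert this using 1
      funext i
      rcases eq_or_ne i j with rfl | hne
      · simp [Function.update_self]
      · simp [Function.update_of_ne hne, Finset.mem_insert, hne]
  have := main Finset.univ
  simpa using this

lemma esc_section (hconn : G.Connected) {K : ℕ}
    (hp : ∃ p : PosK V K, ∀ k, p ∉ W G K k) (C : Fin K → V) :
    ∃ y, ∀ k, ((C, y) : PosK V K) ∉ W G K k := by
  obtain ⟨⟨D₀, r₀⟩, hD⟩ := hp
  by_contra hC
  push_neg at hC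
  have hwalk : ReflTransGen (CopStep G) D₀ C := reflTrans_copStep G hconn D₀ C
  have haux : ∀ D D' : Fin K → V, ReflTransGen (CopStep G) D D' →
      (∀ r : V, ∃ k, ((D', r) : PosK V K) ∈ W G K k) →
      ∀ r : V, ∃ k, ((D, r) : PosK V K) ∈ W G K k := by
    intro D D' hw
    induction hw using ReflTransGen.head_induction_on with
    | refl => exact fun h => h
    | head hstep _ ih => exact fun h => sectionFull_step G hstep (ih h)
  obtain ⟨k, hk⟩ := haux D₀ C hwalk hC r₀
  exact hD k hk


/-! ### Turn-based game helpers -/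

section TB

variable {K : ℕ} (sc : TBCop V K) (sr : TBRob V K)

lemma tbPlay_getLast (t : ℕ) :
    (tbPlay G sc sr t).getLast? = some (tbPos G sc sr t) := by
  cases t with
  | zero => simp [tbPlay, tbPos]
  | succ t => simp [tbPlay, tbPos, List.getLast?_concat]

lemma tbPos_getD (t : ℕ) (d : PosK V K) :
    (tbPlay G sc sr t).getLast?.getD d = tbPos G sc sr t := by
  rw [tbPlay_getLast]; rfl

/-- The cops' (legalized) move in round `t+1`. -/
def tbC (t : ℕ) : Fin K → V := fun i =>
  if sc.2 (tbPlay G sc sr t) i ∈ nbhd G ((tbPos G sc sr t).1 i)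
    then sc.2 (tbPlay G sc sr t) i else (tbPos G sc sr t).1 i

/-- The robber's (legalized) move in round `t+1`. -/
def tbR (t : ℕ) : V :=
  if sr.2 (tbPlay G sc sr t) (tbC G sc sr t) ∈ nbhd G (tbPos G sc sr t).2
    then sr.2 (tbPlay G sc sr t) (tbC G sc sr t) else (tbPos G sc sr t).2

lemma tbPos_zero : tbPos G sc sr 0 = (sc.1, sr.1 sc.1) := by
  simp [tbPlay, tbPos]

lemma tbPos_succ (t : ℕ) :
    tbPos G sc sr (t+1) = (tbC G sc sr t, tbR G sc sr t) := by
  show (tbPlay G sc sr (t+1)).getLast?.getD _ = _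
  conv_lhs => rw [tbPlay]
  rw [List.getLast?_concat]
  rfl

lemma tbC_copStep (t : ℕ) : CopStep G (tbPos G sc sr t).1 (tbC G sc sr t) := by
  intro i
  unfold tbC
  split
  · assumption
  · exact Finset.mem_insert_self _ _

lemma tbR_mem (t : ℕ) : tbR G sc sr t ∈ nbhd G (tbPos G sc sr t).2 := by
  unfold tbR
  split
  · assumption
  · exact Finset.mem_insert_self _ _

end TB

/-! ### Direction (b): if some position escapes `W`, the cops do not win TBCR -/

theorem not_tbCopWin_of_esc (hconn : G.Connected) {K : ℕ}
    (hp : ∃ p : PosK V K, ∀ k, p ∉ W G K k) : ¬ tbCopWin G K := by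
  classical
  rintro ⟨sc, hsc⟩
  set Esc : PosK V K → Prop := fun p => ∀ k, p ∉ W G K k with hEsc
  have hwit : ∀ p : PosK V K, ∃ w, Esc p → (w ∈ nbhd G p.2 ∧ w ∉ NC G p.1 ∧
      ∀ C', CopStep G p.1 C' → Esc ((C', w) : PosK V K)) := by
    intro p
    by_cases h : Esc p
    · obtain ⟨w, h1, h2, h3⟩ := esc_step G h
      exact ⟨w, fun _ => ⟨h1, h2, h3⟩⟩
    · exact ⟨p.2, fun h' => absurd h' h⟩
  choose wit hwitspec using hwit
  obtain ⟨y₀, hy₀⟩ := esc_section G hconn hp sc.1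
  set yC : (Fin K → V) → V := fun C =>
    if h : ∃ y, Esc ((C, y) : PosK V K) then Classical.choose h else y₀ with hyC
  set sr : TBRob V K :=
    (fun C => wit (C, yC C), fun h c' => wit (c', (h.getLast?.getD (sc.1, y₀)).2))
    with hsr
  have hesc0 : Esc ((sc.1, yC sc.1) : PosK V K) := by
    have hex : ∃ y, Esc ((sc.1, y) : PosK V K) := ⟨y₀, hy₀⟩
    simpa [hyC, dif_pos hex] using Classical.choose_spec hex
  -- the invariant
  have hJ : ∀ t, (tbPos G sc sr t).2 ∉ NC G (tbPos G sc sr t).1 ∧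
      ∀ C', CopStep G (tbPos G sc sr t).1 C' →
        Esc ((C', (tbPos G sc sr t).2) : PosK V K) := by
    intro t
    induction t with
    | zero =>
      rw [tbPos_zero]
      have := hwitspec _ hesc0
      exact ⟨this.2.1, this.2.2⟩
    | succ t ih =>
      rw [tbPos_succ]
      have hstep : CopStep G (tbPos G sc sr t).1 (tbC G sc sr t) := tbC_copStep G sc sr t
      have hescC : Esc ((tbC G sc sr t, (tbPos G sc sr t).2) : PosK V K) :=
        ih.2 _ hstep
      have hraw : sr.2 (tbPlay G sc sr t) (tbC G sc sr t) =
          wit (tbC G sc sr t, (tbPos G sc sr t).2) := by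
        simp [hsr, tbPos_getD]
      have hspec := hwitspec _ hescC
      have hR : tbR G sc sr t = wit (tbC G sc sr t, (tbPos G sc sr t).2) := by
        unfold tbR
        rw [hraw, if_pos hspec.1]
      rw [hR]
      exact ⟨hspec.2.1, hspec.2.2⟩
  -- contradiction with capture
  obtain ⟨t, i, hcap⟩ := hsc sr
  rcases hcap with h | h
  · exact (hJ t).1 (h ▸ self_mem_NC G _ i)
  · have : (tbPos G sc sr (t+1)).1 i ∈ NC G (tbPos G sc sr t).1 := by
      rw [tbPos_succ]
      exact copStep_mem_NC G (tbC_copStep G sc sr t) i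
    exact (hJ t).1 (h ▸ this)

/-! ### Direction (a): if every position is in `W`, the cops win TBCR -/

theorem tbCopWin_of_allWin {K : ℕ} (hV : Nonempty V) (hA : AllWin G K) :
    tbCopWin G K := by
  classical
  obtain ⟨v₀⟩ := hV
  set rk : PosK V K → ℕ := fun p => Nat.find (hA p) with hrk
  have rk_spec : ∀ p, p ∈ W G K (rk p) := fun p => Nat.find_spec (hA p)
  have rk_min : ∀ (p : PosK V K) (k), p ∈ W G K k → rk p ≤ k :=
    fun p k h => Nat.find_min' (hA p) h
  have rk_pos : ∀ p, 0 < rk p := by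
    intro p
    rcases Nat.eq_zero_or_pos (rk p) with h | h
    · exact absurd (h ▸ rk_spec p) (by simp [W])
    · exact h
  have hbest : ∀ p : PosK V K, ∃ b, CopStep G p.1 b ∧
      ∀ C', CopStep G p.1 C' → rk ((b, p.2) : PosK V K) ≤ rk ((C', p.2) : PosK V K) := by
    intro p
    obtain ⟨b, hb, hmin⟩ := Finset.exists_min_image
      (Finset.univ.filter (fun C' => CopStep G p.1 C'))
      (fun C' => rk ((C', p.2) : PosK V K))
      ⟨p.1, by simp [copStep_refl]⟩
    refine ⟨b, (Finset.mem_filter.mp hb).2, fun C' hC' => hmin C' ?_⟩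
    simp [hC']
  choose best hbestStep hbestMin using hbest
  set copMove : PosK V K → Fin K → V := fun p i =>
    if p.2 ∈ nbhd G (p.1 i) then p.2
    else (if p.2 ∈ NC G p.1 then p.1 i else best p i) with hcopMove
  set sc : TBCop V K :=
    ((fun _ => v₀), fun h => copMove (h.getLast?.getD ((fun _ => v₀), v₀))) with hsc
  refine ⟨sc, fun sr => ?_⟩
  by_contra hnc
  have hnc' : ∀ t (i : Fin K),
      ¬ (tbPos G sc sr t).1 i = (tbPos G sc sr t).2 ∧
      ¬ (tbPos G sc sr (t+1)).1 i = (tbPos G sc sr t).2 := by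
    simp only [tbCaptured, not_exists, not_or] at hnc
    exact hnc
  have hmove : ∀ t, sc.2 (tbPlay G sc sr t) = copMove (tbPos G sc sr t) := by
    intro t
    simp [hsc, tbPos_getD]
  -- the robber is never adjacent to (or on) a cop
  have hcmv : ∀ t (i : Fin K), copMove (tbPos G sc sr t) i =
      (if (tbPos G sc sr t).2 ∈ nbhd G ((tbPos G sc sr t).1 i) then (tbPos G sc sr t).2
       else (if (tbPos G sc sr t).2 ∈ NC G (tbPos G sc sr t).1 then (tbPos G sc sr t).1 i
         else best (tbPos G sc sr t) i)) := fun t i => rfl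
  have hexp : ∀ t, (tbPos G sc sr t).2 ∉ NC G (tbPos G sc sr t).1 := by
    intro t hin
    obtain ⟨i, hi⟩ := (mem_NC G).mp hin
    have hC : (tbPos G sc sr (t+1)).1 i = (tbPos G sc sr t).2 := by
      rw [tbPos_succ]
      show tbC G sc sr t i = _
      unfold tbC
      rw [hmove t, hcmv t i, if_pos hi, if_pos hi]
    exact (hnc' t i).2 hC
  have hCbest : ∀ t, tbC G sc sr t = best (tbPos G sc sr t) := by
    intro t
    funext i
    have hni : (tbPos G sc sr t).2 ∉ nbhd G ((tbPos G sc sr t).1 i) := by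
      intro hmem
      exact hexp t ((mem_NC G).mpr ⟨i, hmem⟩)
    unfold tbC
    rw [hmove t, hcmv t i, if_neg hni, if_neg (hexp t),
      if_pos (hbestStep (tbPos G sc sr t) i)]
  set m : ℕ → ℕ := fun t => rk ((tbC G sc sr t, (tbPos G sc sr t).2) : PosK V K) with hm
  have hdesc : ∀ t, m (t+1) < m t := by
    intro t
    have h1 : ((tbC G sc sr t, (tbPos G sc sr t).2) : PosK V K) ∈ W G K (m t) := rk_spec _
    have hmt : m t = (m t - 1) + 1 := (Nat.succ_pred_eq_of_pos (rk_pos _)).symm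
    rw [hmt] at h1
    have hw1 : (tbPos G sc sr (t+1)).2 ∈ nbhd G (tbPos G sc sr t).2 := by
      rw [tbPos_succ]; exact tbR_mem G sc sr t
    have hw2 : (tbPos G sc sr (t+1)).2 ∉ NC G (tbC G sc sr t) := by
      rw [tbPos_succ]
      have h := hexp (t+1)
      rw [tbPos_succ] at h
      exact h
    obtain ⟨C'', hstep'', hmem''⟩ := h1 _ hw1 hw2
    have h2 : m (t+1) ≤ rk ((C'', (tbPos G sc sr (t+1)).2) : PosK V K) := by
      have hb := hbestMin (tbPos G sc sr (t+1)) C'' (by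
        rw [tbPos_succ]; exact hstep'')
      calc m (t+1) = rk ((tbC G sc sr (t+1), (tbPos G sc sr (t+1)).2) : PosK V K) := rfl
        _ = rk ((best (tbPos G sc sr (t+1)), (tbPos G sc sr (t+1)).2) : PosK V K) := by
              rw [hCbest (t+1)]
        _ ≤ _ := hb
    have h3 : rk ((C'', (tbPos G sc sr (t+1)).2) : PosK V K) ≤ m t - 1 := by
      apply rk_min
      have : (tbPos G sc sr (t+1)).2 = tbR G sc sr t := by rw [tbPos_succ]
      exact hmem''
    omega
  have hbound : ∀ t, m t + t ≤ m 0 := by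
    intro t
    induction t with
    | zero => omega
    | succ t ih => have := hdesc t; omega
  have := hbound (m 0 + 1)
  omega

/-- Computation of `ccStep` from a free position when the robber's move is legal and
outside the cops' reach. -/
lemma ccStep_free {K : ℕ} {q : PosK V K} (hfree : ¬ ∃ i, q.1 i = q.2)
    (u : Fin K → V) {w : V} (hw : w ∈ nbhd G q.2) (hwNC : w ∉ NC G q.1) :
    ccStep G q u w = ((fun i => if u i ∈ nbhd G (q.1 i) then u i else q.1 i), w) := by
  have hep : ¬ ∃ i, (if u i ∈ nbhd G (q.1 i) then u i else q.1 i) = q.2 ∧ w = q.1 i := by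
    rintro ⟨i, _, h2⟩
    apply hwNC
    rw [h2]
    exact self_mem_NC G q.1 i
  simp only [ccStep, if_neg hfree]
  rw [if_pos hw, if_neg hep]


/-! ### Direction (R1): if every position is in `W`, the cops win CCCR -/

section R1

variable {K : ℕ}

/-- A position is a capture position. -/
def Cap (q : PosK V K) : Prop := ∃ i, q.1 i = q.2

instance decCopStep (C : Fin K → V) : DecidablePred (fun C' => CopStep G C C') :=
  fun C' => decidable_of_iff (∀ i, C' i ∈ nbhd G (C i)) Iff.rfl

/-- The finset of legal joint cop moves from a position. -/
def legalMoves (q : PosK V K) : Finset (Fin K → V) :=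
  Finset.univ.filter (fun C' => CopStep G q.1 C')

lemma legalMoves_nonempty (q : PosK V K) : (legalMoves G q).Nonempty :=
  ⟨q.1, by simp [legalMoves, copStep_refl]⟩

lemma mem_legalMoves {q : PosK V K} {C' : Fin K → V} :
    C' ∈ legalMoves G q ↔ CopStep G q.1 C' := by simp [legalMoves]

/-- The cops' distribution: uniform over all legal joint moves. -/
def copPMF (q : PosK V K) : PMF (Fin K → V) :=
  PMF.uniformOfFinset (legalMoves G q) (legalMoves_nonempty G q)

/-- Uniform lower bound on the probability of each legal move. -/
def del (V : Type*) [Fintype V] (K : ℕ) : ENNReal :=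
  ((Fintype.card (Fin K → V) : ENNReal))⁻¹

lemma del_ne_zero : del V K ≠ 0 := by
  simp [del]

lemma del_le_one [Nonempty V] : del V K ≤ 1 := by
  rw [del]
  apply ENNReal.inv_le_one.mpr
  have : (1 : ℕ) ≤ Fintype.card (Fin K → V) := Fintype.card_pos
  exact_mod_cast this

lemma copPMF_ge {q : PosK V K} {C' : Fin K → V} (h : CopStep G q.1 C') :
    del V K ≤ copPMF G q C' := by
  rw [copPMF, PMF.uniformOfFinset_apply_of_mem (legalMoves_nonempty G q) ((mem_legalMoves G).mpr h), del]
  apply ENNReal.inv_le_inv.mpr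
  exact_mod_cast Finset.card_le_univ _

/-- The memoryless cop strategy. -/
def piC (v₀ : V) : CCCop V K := fun h => copPMF G (h.getLast?.getD ((fun _ => v₀), v₀))

lemma clamp_eq {q : PosK V K} {u : Fin K → V} (h : CopStep G q.1 u) :
    (fun i => if u i ∈ nbhd G (q.1 i) then u i else q.1 i) = u :=
  funext fun i => if_pos (h i)

lemma clamp_copStep (q : PosK V K) (u : Fin K → V) :
    CopStep G q.1 (fun i => if u i ∈ nbhd G (q.1 i) then u i else q.1 i) := by
  intro i
  dsimp only
  split
  · assumption
  · exact Finset.mem_insert_self _ _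

lemma ccStep_captured {q : PosK V K} (h : Cap q) (u : Fin K → V) (w : V) :
    ccStep G q u w = q := if_pos h

lemma ccStep_clamp (q : PosK V K) (u : Fin K → V) (w : V) :
    ccStep G q u w = ccStep G q u (if w ∈ nbhd G q.2 then w else q.2) := by
  by_cases hw : w ∈ nbhd G q.2
  · rw [if_pos hw]
  · rw [if_neg hw]
    simp only [ccStep]
    rw [if_neg hw, if_pos (mem_nbhd_self G q.2)]

/-- The key descent lemma: from a free position in `W (k+1)`, for every robber move
there is a legal cop response that either captures or lands in `W k`. -/
lemma descend {q : PosK V K} (hfree : ¬ Cap q) {k : ℕ} (hq : q ∈ W G K (k+1)) (w : V) :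
    ∃ u, CopStep G q.1 u ∧
      (Cap (ccStep G q u w) ∨ ccStep G q u w ∈ W G K k) := by
  classical
  set w' : V := if w ∈ nbhd G q.2 then w else q.2 with hw'
  have hw'mem : w' ∈ nbhd G q.2 := by
    rw [hw']; split
    · assumption
    · exact Finset.mem_insert_self _ _
  by_cases hcov : w' ∈ NC G q.1
  · -- covered: some cop can land on the robber's (clamped) move
    obtain ⟨j, hj⟩ := (mem_NC G).mp hcov
    set u : Fin K → V := Function.update q.1 j w' with hu
    have hustep : CopStep G q.1 u := by
      intro i
      rcases eq_or_ne i j with rfl | hne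
      · rw [hu, Function.update_self]; exact hj
      · rw [hu, Function.update_of_ne hne]; exact Finset.mem_insert_self _ _
    refine ⟨u, hustep, Or.inl ?_⟩
    rw [ccStep_clamp, ← hw']
    show Cap (ccStep G q u w')
    have hcl : ∀ i, (if u i ∈ nbhd G (q.1 i) then u i else q.1 i) = u i :=
      fun i => if_pos (hustep i)
    simp only [ccStep, if_neg (show ¬∃ i, q.1 i = q.2 from hfree), hcl, if_pos hw'mem]
    by_cases hep : ∃ i, Function.update q.1 j w' i = q.2 ∧ w' = q.1 i
    · rw [if_pos hep]
      obtain ⟨i, hi1, _⟩ := hep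
      exact ⟨i, hi1⟩
    · rw [if_neg hep]
      exact ⟨j, Function.update_self j w' q.1⟩
  · -- safe: use the witness from `W (k+1)`
    obtain ⟨C', hC', hmem⟩ := hq w' hw'mem hcov
    refine ⟨C', hC', Or.inr ?_⟩
    rw [ccStep_clamp, ← hw']
    have heq := ccStep_free G hfree C' hw'mem hcov
    rw [heq, clamp_eq G hC']
    exact hmem

variable (πC : CCCop V K) (πR : CCRob V K) (init : PosK V K)

/-- One concurrent round, as a kernel on histories. -/
def oneStep (h : List (PosK V K)) : PMF (List (PosK V K)) :=
  (πC h).bind fun u => (πR h).bind fun w =>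
    PMF.pure (h ++ [ccStep G (h.getLast?.getD init) u w])

/-- `k` more concurrent rounds. -/
def cont : ℕ → List (PosK V K) → PMF (List (PosK V K))
  | 0, h => PMF.pure h
  | (k+1), h => (oneStep G πC πR init h).bind (cont k)

lemma cont_succ' (k : ℕ) (h : List (PosK V K)) :
    cont G πC πR init (k+1) h
      = (cont G πC πR init k h).bind (oneStep G πC πR init) := by
  induction k generalizing h with
  | zero =>
    show (oneStep G πC πR init h).bind (cont G πC πR init 0) = _
    have h0 : cont G πC πR init 0 = PMF.pure := funext fun _ => rfl
    rw [h0, PMF.bind_pure]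
    show _ = PMF.bind (PMF.pure h) _
    rw [PMF.pure_bind]
  | succ k ih =>
    show (oneStep G πC πR init h).bind (cont G πC πR init (k+1)) = _
    have hfun : cont G πC πR init (k+1) = fun h' =>
        (cont G πC πR init k h').bind (oneStep G πC πR init) := funext fun h' => ih h'
    conv_lhs => rw [hfun]
    rw [← PMF.bind_bind]
    show ((oneStep G πC πR init h).bind (cont G πC πR init k)).bind (oneStep G πC πR init)
        = ((oneStep G πC πR init h).bind (cont G πC πR init k)).bind (oneStep G πC πR init)
    rfl

lemma ccPlay_eq_bind_cont (t k : ℕ) :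
    ccPlay G πC πR init (t + k)
      = (ccPlay G πC πR init t).bind (cont G πC πR init k) := by
  induction k with
  | zero =>
    show ccPlay G πC πR init t = _
    have h0 : cont G πC πR init 0 = PMF.pure := funext fun _ => rfl
    rw [h0, PMF.bind_pure]
  | succ k ih =>
    have h1 : ccPlay G πC πR init (t + (k+1))
        = (ccPlay G πC πR init (t+k)).bind (oneStep G πC πR init) := by
      show ccPlay G πC πR init ((t+k)+1) = _
      rw [ccPlay]
      rfl
    rw [h1, ih, PMF.bind_bind]
    congr 1
    funext h
    exact (cont_succ' G πC πR init k h).symm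

lemma cont_succ_eq (k : ℕ) (h : List (PosK V K)) :
    cont G πC πR init (k+1) h
      = (πC h).bind fun u => (πR h).bind fun w =>
          cont G πC πR init k (h ++ [ccStep G (h.getLast?.getD init) u w]) := by
  show (oneStep G πC πR init h).bind _ = _
  rw [oneStep, PMF.bind_bind]
  congr 1
  funext u
  rw [PMF.bind_bind]
  congr 1
  funext w
  rw [PMF.pure_bind]

/-- Histories whose final position is capture-free. -/
def FreeSet (init : PosK V K) : Set (List (PosK V K)) :=
  {h | ∀ i, (h.getLast?.getD init).1 i ≠ (h.getLast?.getD init).2}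

/-- Histories whose final position is a capture. -/
def CapSet (init : PosK V K) : Set (List (PosK V K)) := (FreeSet init)ᶜ

lemma mem_CapSet {init : PosK V K} {h : List (PosK V K)} :
    h ∈ CapSet init ↔ Cap (h.getLast?.getD init) := by
  simp [CapSet, FreeSet, Cap, not_forall]

lemma mem_FreeSet {init : PosK V K} {h : List (PosK V K)} :
    h ∈ FreeSet init ↔ ¬ Cap (h.getLast?.getD init) := by
  rw [← mem_CapSet]
  exact (not_not).symm

lemma concat_getD (h : List (PosK V K)) (x d : PosK V K) :
    ((h ++ [x]).getLast?.getD d) = x := by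
  rw [List.getLast?_concat]
  rfl

lemma cont_support_cap (k : ℕ) :
    ∀ h, Cap (h.getLast?.getD init) →
    ∀ h' ∈ (cont G πC πR init k h).support, Cap (h'.getLast?.getD init) := by
  induction k with
  | zero =>
    intro h hc h' hh'
    have h0 : cont G πC πR init 0 h = PMF.pure h := rfl
    rw [h0, PMF.support_pure] at hh'
    subst hh'
    exact hc
  | succ k ih =>
    intro h hc h' hh'
    have h1 : cont G πC πR init (k+1) h
        = (oneStep G πC πR init h).bind (cont G πC πR init k) := rfl
    rw [h1] at hh'
    obtain ⟨h1', hh1, hh'2⟩ := (PMF.mem_support_bind_iff _ _ _).mp hh'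
    rw [oneStep] at hh1
    obtain ⟨u, _, h2⟩ := (PMF.mem_support_bind_iff _ _ _).mp hh1
    obtain ⟨w, _, h3⟩ := (PMF.mem_support_bind_iff _ _ _).mp h2
    rw [PMF.support_pure] at h3
    subst h3
    refine ih _ ?_ h' hh'2
    rw [concat_getD, ccStep_captured G hc]
    exact hc

lemma pmf_compl {α : Type*} (p : PMF α) (s : Set α) :
    p.toOuterMeasure s + p.toOuterMeasure sᶜ = 1 := by
  rw [PMF.toOuterMeasure_apply, PMF.toOuterMeasure_apply, ← ENNReal.tsum_add,
    ← PMF.tsum_coe p]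
  refine tsum_congr fun x => ?_
  by_cases hx : x ∈ s <;> simp [Set.indicator, hx]

lemma toOuterMeasure_le_one {α : Type*} (p : PMF α) (s : Set α) :
    p.toOuterMeasure s ≤ 1 := by
  calc p.toOuterMeasure s ≤ p.toOuterMeasure s + p.toOuterMeasure sᶜ := le_self_add
    _ = 1 := pmf_compl p s

lemma cont_cap_lower (v₀ : V) :
    ∀ (k : ℕ) (h : List (PosK V K)), h ≠ [] →
    (Cap (h.getLast?.getD init) ∨ (h.getLast?.getD init) ∈ W G K k) →
    del V K ^ k ≤ (cont G (piC G v₀) πR init k h).toOuterMeasure (CapSet init) := by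
  haveI : Nonempty V := ⟨v₀⟩
  intro k
  induction k with
  | zero =>
    intro h _ hyp
    rcases hyp with hc | hw
    · have h0 : cont G (piC G v₀) πR init 0 h = PMF.pure h := rfl
      rw [h0, PMF.toOuterMeasure_pure_apply, if_pos (mem_CapSet.mpr hc)]
      simp
    · exact absurd hw (by simp [W])
  | succ k ih =>
    intro h hne hyp
    by_cases hcap : Cap (h.getLast?.getD init)
    · have h1 : (cont G (piC G v₀) πR init (k+1) h).toOuterMeasure (CapSet init) = 1 :=
        (PMF.toOuterMeasure_apply_eq_one_iff _ _).mpr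
          (fun h' hh' => mem_CapSet.mpr
            (cont_support_cap G (piC G v₀) πR init (k+1) h hcap h' hh'))
      rw [h1]
      exact pow_le_one' (del_le_one) _
    · have hW : (h.getLast?.getD init) ∈ W G K (k+1) := hyp.resolve_left hcap
      set q : PosK V K := h.getLast?.getD init with hq
      obtain ⟨x, hx⟩ : ∃ x, h.getLast? = some x := by
        cases hl : h.getLast? with
        | none =>
          exfalso
          have h2 := (List.getLast?_isSome (l := h)).mpr hne
          rw [hl] at h2
          simp at h2
        | some x => exact ⟨x, rfl⟩
      have hπCh : piC G v₀ h = copPMF G q := by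
        rw [piC]
        congr 1
        rw [hx, hq, hx]
        rfl
      set F : (Fin K → V) → V → ENNReal := fun u w =>
        (cont G (piC G v₀) πR init k (h ++ [ccStep G q u w])).toOuterMeasure (CapSet init)
        with hF
      have key : ∀ w : V, ∃ u, CopStep G q.1 u ∧ del V K ^ k ≤ F u w := by
        intro w
        obtain ⟨u, hu, hgood⟩ := descend G hcap hW w
        refine ⟨u, hu, ?_⟩
        refine ih (h ++ [ccStep G q u w]) (by simp) ?_
        rw [concat_getD]
        exact hgood
      choose ustar hustar1 hustar2 using key
      have hexp : (cont G (piC G v₀) πR init (k+1) h).toOuterMeasure (CapSet init)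
          = ∑' u, (piC G v₀ h) u * ∑' w, (πR h) w * F u w := by
        rw [cont_succ_eq, PMF.toOuterMeasure_bind_apply]
        refine tsum_congr fun u => ?_
        congr 1
        rw [PMF.toOuterMeasure_bind_apply]
      rw [hexp]
      calc del V K ^ (k+1)
          = del V K ^ (k+1) * ∑' w, (πR h) w := by rw [PMF.tsum_coe, mul_one]
        _ = ∑' w, del V K ^ (k+1) * (πR h) w := ENNReal.tsum_mul_left.symm
        _ ≤ ∑' w, (piC G v₀ h) (ustar w) * ((πR h) w * F (ustar w) w) := by
            refine ENNReal.tsum_le_tsum fun w => ?_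
            have h1 : del V K ≤ (piC G v₀ h) (ustar w) := by
              rw [hπCh]
              exact copPMF_ge G (hustar1 w)
            calc del V K ^ (k+1) * (πR h) w
                = del V K * ((πR h) w * del V K ^ k) := by ring
              _ ≤ (piC G v₀ h) (ustar w) * ((πR h) w * F (ustar w) w) :=
                  mul_le_mul' h1 (mul_le_mul' le_rfl (hustar2 w))
        _ ≤ ∑' w, ∑' u, (piC G v₀ h) u * ((πR h) w * F u w) :=
            ENNReal.tsum_le_tsum fun w => ENNReal.le_tsum (ustar w)
        _ = ∑' u, ∑' w, (piC G v₀ h) u * ((πR h) w * F u w) := ENNReal.tsum_comm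
        _ = ∑' u, (piC G v₀ h) u * ∑' w, (πR h) w * F u w :=
            tsum_congr fun u => ENNReal.tsum_mul_left

lemma ccPlay_support_ne_nil (t : ℕ) :
    ∀ h ∈ (ccPlay G πC πR init t).support, h ≠ [] := by
  induction t with
  | zero =>
    intro h hh
    rw [ccPlay, PMF.support_pure] at hh
    subst hh
    simp
  | succ t _ =>
    intro h hh
    rw [ccPlay] at hh
    obtain ⟨h1, _, h2⟩ := (PMF.mem_support_bind_iff _ _ _).mp hh
    obtain ⟨u, _, h3⟩ := (PMF.mem_support_bind_iff _ _ _).mp h2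
    obtain ⟨w, _, h4⟩ := (PMF.mem_support_bind_iff _ _ _).mp h3
    rw [PMF.support_pure] at h4
    subst h4
    simp

lemma cont_free_zero (k : ℕ) (h : List (PosK V K))
    (hcap : Cap (h.getLast?.getD init)) :
    (cont G πC πR init k h).toOuterMeasure (FreeSet init) = 0 := by
  rw [PMF.toOuterMeasure_apply_eq_zero_iff]
  rw [Set.disjoint_left]
  intro h' hh' hfree
  exact (mem_FreeSet.mp hfree) (cont_support_cap G πC πR init k h hcap h' hh')

lemma cont_free_upper (v₀ : V) (k : ℕ) (h : List (PosK V K)) (hne : h ≠ [])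
    (hyp : Cap (h.getLast?.getD init) ∨ (h.getLast?.getD init) ∈ W G K k) :
    (cont G (piC G v₀) πR init k h).toOuterMeasure (FreeSet init)
      ≤ 1 - del V K ^ k := by
  have hcap := cont_cap_lower G πR init v₀ k h hne hyp
  have hsum := pmf_compl (cont G (piC G v₀) πR init k h) (FreeSet init)
  have hadd : (cont G (piC G v₀) πR init k h).toOuterMeasure (FreeSet init)
      + del V K ^ k ≤ 1 := by
    rw [← hsum]
    exact add_le_add le_rfl hcap
  refine ENNReal.le_sub_of_add_le_right (ENNReal.pow_ne_top ?_) hadd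
  haveI : Nonempty V := ⟨v₀⟩
  simp only [del, ne_eq, ENNReal.inv_eq_top, Nat.cast_eq_zero]
  exact Fintype.card_ne_zero

theorem ccCopWin_of_allWin (hV : Nonempty V) {K : ℕ} (hA : AllWin G K) :
    ccCopWin G K := by
  classical
  obtain ⟨v₀⟩ := hV
  haveI : Nonempty V := ⟨v₀⟩
  refine ⟨piC G v₀, fun init πR => ?_⟩
  set T : ℕ := Finset.univ.sup (fun q : PosK V K => Nat.find (hA q)) with hT
  have hWT : ∀ q : PosK V K, q ∈ W G K T := fun q =>
    W_mono G (Finset.le_sup (Finset.mem_univ q)) (Nat.find_spec (hA q))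
  have hFree_eq : ∀ t, ccFreeProb G (piC G v₀) πR init t
      = (ccPlay G (piC G v₀) πR init t).toOuterMeasure (FreeSet init) := fun t => rfl
  have hcontract : ∀ t, ccFreeProb G (piC G v₀) πR init (t + T)
      ≤ (1 - del V K ^ T) * ccFreeProb G (piC G v₀) πR init t := by
    intro t
    rw [hFree_eq, hFree_eq, ccPlay_eq_bind_cont, PMF.toOuterMeasure_bind_apply]
    have hpt : ∀ h, (ccPlay G (piC G v₀) πR init t) h
          * (cont G (piC G v₀) πR init T h).toOuterMeasure (FreeSet init)
        ≤ (1 - del V K ^ T)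
          * Set.indicator (FreeSet init) (ccPlay G (piC G v₀) πR init t) h := by
      intro h
      by_cases hzero : (ccPlay G (piC G v₀) πR init t) h = 0
      · rw [hzero, zero_mul]
        exact zero_le
      · have hsup : h ∈ (ccPlay G (piC G v₀) πR init t).support :=
          (PMF.mem_support_iff _ _).mpr hzero
        have hne := ccPlay_support_ne_nil G (piC G v₀) πR init t h hsup
        by_cases hcap : Cap (h.getLast?.getD init)
        · rw [cont_free_zero G (piC G v₀) πR init T h hcap, mul_zero]
          exact zero_le
        · have hmem : h ∈ FreeSet init := mem_FreeSet.mpr hcap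
          rw [Set.indicator_of_mem hmem]
          rw [mul_comm ((1:ENNReal) - del V K ^ T) _]
          exact mul_le_mul' le_rfl
            (cont_free_upper G πR init v₀ T h hne (Or.inr (hWT _)))
    calc (∑' h, (ccPlay G (piC G v₀) πR init t) h
            * (cont G (piC G v₀) πR init T h).toOuterMeasure (FreeSet init))
        ≤ ∑' h, (1 - del V K ^ T)
            * Set.indicator (FreeSet init) (ccPlay G (piC G v₀) πR init t) h :=
          ENNReal.tsum_le_tsum hpt
      _ = (1 - del V K ^ T)
            * ∑' h, Set.indicator (FreeSet init) (ccPlay G (piC G v₀) πR init t) h :=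
          ENNReal.tsum_mul_left
      _ = (1 - del V K ^ T)
            * (ccPlay G (piC G v₀) πR init t).toOuterMeasure (FreeSet init) := by
          rw [PMF.toOuterMeasure_apply]
  have hiter : ∀ m : ℕ, ccFreeProb G (piC G v₀) πR init (m * T)
      ≤ (1 - del V K ^ T) ^ m := by
    intro m
    induction m with
    | zero =>
      rw [zero_mul, pow_zero, hFree_eq]
      exact toOuterMeasure_le_one _ _
    | succ m ih =>
      rw [Nat.succ_mul, pow_succ, mul_comm ((1 - del V K ^ T) ^ m) _]
      exact (hcontract (m * T)).trans (mul_le_mul' le_rfl ih)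
  have hlt1 : (1 - del V K ^ T) < 1 :=
    ENNReal.sub_lt_self ENNReal.one_ne_top one_ne_zero (pow_ne_zero T (del_ne_zero))
  have htend := ENNReal.tendsto_pow_atTop_nhds_zero_of_lt_one hlt1
  rw [ENNReal.tendsto_atTop_zero] at htend
  refine le_antisymm ?_ zero_le
  refine ENNReal.le_of_forall_pos_le_add fun ε hε _ => ?_
  obtain ⟨N, hN⟩ := htend (ε : ENNReal) (by exact_mod_cast hε)
  calc (⨅ t : ℕ, ccFreeProb G (piC G v₀) πR init t)
      ≤ ccFreeProb G (piC G v₀) πR init (N * T) := iInf_le _ _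
    _ ≤ (1 - del V K ^ T) ^ N := hiter N
    _ ≤ (ε : ENNReal) := hN N le_rfl
    _ = 0 + (ε : ENNReal) := (zero_add _).symm

end R1

/-! ### Direction (R2): if some position escapes `W`, the cops do not win CCCR -/

theorem not_ccCopWin_of_esc {K : ℕ}
    (hp : ∃ p : PosK V K, ∀ k, p ∉ W G K k) : ¬ ccCopWin G K := by
  classical
  rintro ⟨πC, hπ⟩
  set Esc : PosK V K → Prop := fun p => ∀ k, p ∉ W G K k with hEsc
  have hwit : ∀ p : PosK V K, ∃ w, Esc p → (w ∈ nbhd G p.2 ∧ w ∉ NC G p.1 ∧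
      ∀ C', CopStep G p.1 C' → Esc ((C', w) : PosK V K)) := by
    intro p
    by_cases h : Esc p
    · obtain ⟨w, h1, h2, h3⟩ := esc_step G h
      exact ⟨w, fun _ => ⟨h1, h2, h3⟩⟩
    · exact ⟨p.2, fun h' => absurd h' h⟩
  choose wit hwitspec using hwit
  obtain ⟨p₀, hp₀⟩ := hp
  have hescp₀ : Esc p₀ := hp₀
  set init : PosK V K := (p₀.1, wit p₀) with hinit
  have hinitEsc : Esc init := by
    exact (hwitspec _ hescp₀).2.2 p₀.1 (copStep_refl G p₀.1)
  have hinitFree : ∀ i, init.1 i ≠ init.2 := by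
    intro i h
    apply (hwitspec _ hescp₀).2.1
    show wit p₀ ∈ NC G p₀.1
    have h' : p₀.1 i = wit p₀ := h
    rw [← h']
    exact self_mem_NC G p₀.1 i
  set πR : CCRob V K := fun h => PMF.pure (wit (h.getLast?.getD init)) with hπR
  -- every history in the support ends in a free, escaping position
  have hsupp : ∀ t, ∀ h ∈ (ccPlay G πC πR init t).support,
      ∃ q : PosK V K, h.getLast? = some q ∧ Esc q ∧ ∀ i, q.1 i ≠ q.2 := by
    intro t
    induction t with
    | zero =>
      intro h hh
      rw [ccPlay, PMF.support_pure] at hh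
      subst hh
      exact ⟨init, rfl, hinitEsc, hinitFree⟩
    | succ t ih =>
      intro h' hh'
      rw [ccPlay] at hh'
      obtain ⟨h, hh, hrest⟩ := (PMF.mem_support_bind_iff _ _ _).mp hh'
      obtain ⟨u, hu, hrest2⟩ := (PMF.mem_support_bind_iff _ _ _).mp hrest
      obtain ⟨w, hw, hpure⟩ := (PMF.mem_support_bind_iff _ _ _).mp hrest2
      rw [PMF.support_pure] at hpure
      subst hpure
      obtain ⟨q, hq, hqEsc, hqFree⟩ := ih h hh
      have hgetD : h.getLast?.getD init = q := by rw [hq]; rfl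
      have hwq : w = wit q := by
        rw [hπR] at hw
        simp only [hgetD] at hw
        simpa using hw
      subst hwq
      have hspec := hwitspec _ hqEsc
      -- compute the step
      have hfree' : ¬ ∃ i, q.1 i = q.2 := by
        rintro ⟨i, hi⟩; exact hqFree i hi
      have hu'step : CopStep G q.1 (fun i => if u i ∈ nbhd G (q.1 i) then u i else q.1 i) := by
        intro i
        dsimp only
        split
        · assumption
        · exact Finset.mem_insert_self _ _
      have hstepeq := ccStep_free G hfree' u hspec.1 hspec.2.1
      refine ⟨((fun i => if u i ∈ nbhd G (q.1 i) then u i else q.1 i), wit q), ?_, ?_, ?_⟩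
      · rw [hgetD, hstepeq, List.getLast?_concat]
      · exact hspec.2.2 _ hu'step
      · intro i hi
        apply hspec.2.1
        show wit q ∈ NC G q.1
        have hi' : (if u i ∈ nbhd G (q.1 i) then u i else q.1 i) = wit q := hi
        rw [← hi']
        exact copStep_mem_NC G hu'step i
  have hfree1 : ∀ t, ccFreeProb G πC πR init t = 1 := by
    intro t
    rw [ccFreeProb, PMF.toOuterMeasure_apply_eq_one_iff]
    intro h hh
    obtain ⟨q, hq, _, hqFree⟩ := hsupp t h hh
    show ∀ i, _
    rw [hq]
    exact hqFree
  have := hπ init πR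
  rw [iInf_congr hfree1] at this
  simp at this

end CCCRAux

/-- for every finite, simple, connected graph `G` and every positive
integer `K`, the cop number `c(G)` equals `K` if and only if the concurrent cop number
`c̃(G)` equals `K`. -/
theorem copNumber_eq_iff_ccopNumber_eq (G : SimpleGraph V) [DecidableRel G.Adj]
    (hconn : G.Connected) :
    ∀ K : ℕ, 0 < K → (copNumber G = K ↔ ccopNumber G = K) := by
  have hsets : {K : ℕ | tbCopWin G K} = {K : ℕ | ccCopWin G K} := by
    ext K
    simp only [Set.mem_setOf_eq]
    constructor
    · intro htb
      by_cases hA : CCCRAux.AllWin G K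
      · exact CCCRAux.ccCopWin_of_allWin G hconn.nonempty hA
      · exfalso
        refine CCCRAux.not_tbCopWin_of_esc G hconn ?_ htb
        rw [CCCRAux.AllWin] at hA
        push_neg at hA
        exact hA
    · intro hcc
      by_cases hA : CCCRAux.AllWin G K
      · exact CCCRAux.tbCopWin_of_allWin G hconn.nonempty hA
      · exfalso
        refine CCCRAux.not_ccCopWin_of_esc G ?_ hcc
        rw [CCCRAux.AllWin] at hA
        push_neg at hA
        exact hA
  have heq : ccopNumber G = copNumber G := by
    rw [ccopNumber, copNumber, hsets]
  intro K _
  rw [heq]
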